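/- With the notation Y_{1,i}, Y_{2,j} (1 ≤ i, j ≤ h) for monomials with pairwise disjoint supports, and u_{i,j} = Y_{1,i}Y_{2,j} for i < j ordered as in Proposition on B_{ℓ,h}: for j − i ≥ 3, ((u_{p,q} : (p,q) precedes (i,j)) : u_{i,j−1}) equals the ideal (Y_{1,j−2},…,Y_{1,i+1}, Y_{2,j},…,Y_{2,h}); i.e., the colon of the ideal generated by all earlier u's by u_{i,j−1} is generated by these h − i − 1 monomials with pairwise disjoint supports. -/

import Mathlib

open MvPolynomial

private lemma finsupp_le_of_disjoint {σ : Type} {a c e : σ →₀ ℕ}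
    (hd : Disjoint a.support e.support) (h : a ≤ c + e) : a ≤ c := by
  intro x
  by_cases hx : x ∈ a.support
  · have he : e x = 0 := by
      by_contra h0
      exact (Finset.disjoint_left.mp hd hx) (Finsupp.mem_support_iff.mpr h0)
    have := h x
    simpa [Finsupp.add_apply, he] using this
  · simp [Finsupp.notMem_support_iff.mp hx]

private lemma supp_mul_monomial {K : Type} [Field K] {σ : Type}
    (f : MvPolynomial σ K) (e : σ →₀ ℕ) :
    (f * monomial e 1).support = f.support.map (addRightEmbedding e) := by
  rw [← single_eq_monomial]
  exact AddMonoidAlgebra.support_coeff_mul_single f 1 (by simp) e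

theorem stmt_15 {K : Type} [Field K] {σ : Type} (h ℓ : ℕ) (hh : 2 ≤ h) (hℓ : 1 ≤ ℓ)
    (y1 y2 : ℕ → (σ →₀ ℕ))
    (hdeg1 : ∀ i, 1 ≤ i → i ≤ h → (monomial (y1 i) (1 : K)).totalDegree = ℓ)
    (hdeg2 : ∀ i, 1 ≤ i → i ≤ h → (monomial (y2 i) (1 : K)).totalDegree = ℓ)
    (hdisj11 : ∀ i j, 1 ≤ i → i ≤ h → 1 ≤ j → j ≤ h → i ≠ j →
      Disjoint (y1 i).support (y1 j).support)
    (hdisj22 : ∀ i j, 1 ≤ i → i ≤ h → 1 ≤ j → j ≤ h → i ≠ j →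
      Disjoint (y2 i).support (y2 j).support)
    (hdisj12 : ∀ i j, 1 ≤ i → i ≤ h → 1 ≤ j → j ≤ h →
      Disjoint (y1 i).support (y2 j).support)
    (Y1 Y2 : ℕ → MvPolynomial σ K)
    (hY1 : ∀ i, Y1 i = monomial (y1 i) 1) (hY2 : ∀ i, Y2 i = monomial (y2 i) 1)
    (u : ℕ → ℕ → MvPolynomial σ K) (hu : ∀ i j, u i j = Y1 i * Y2 j)
    (i j : ℕ) (hi : 1 ≤ i) (hij : i + 3 ≤ j) (hj : j ≤ h) :
    (Ideal.span {x | ∃ p q, 1 ≤ p ∧ p < q ∧ q ≤ h ∧ (i < p ∨ (p = i ∧ j ≤ q)) ∧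
        x = u p q}).colon (Ideal.span {u i (j - 1)})
      = Ideal.span
          ({x | ∃ s, i + 1 ≤ s ∧ s ≤ j - 2 ∧ x = Y1 s} ∪
           {x | ∃ s, j ≤ s ∧ s ≤ h ∧ x = Y2 s}) := by
  classical
  have humon : ∀ p q, u p q = monomial (y1 p + y2 q) (1 : K) := by
    intro p q
    rw [hu, hY1, hY2, monomial_mul, one_mul]
  -- the two generating sets as images
  have hS : {x : MvPolynomial σ K | ∃ p q, 1 ≤ p ∧ p < q ∧ q ≤ h ∧
      (i < p ∨ (p = i ∧ j ≤ q)) ∧ x = u p q}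
      = (fun m => monomial m (1 : K)) ''
        {m | ∃ p q, 1 ≤ p ∧ p < q ∧ q ≤ h ∧ (i < p ∨ (p = i ∧ j ≤ q)) ∧
          m = y1 p + y2 q} := by
    ext x
    constructor
    · rintro ⟨p, q, h1, h2, h3, h4, rfl⟩
      exact ⟨y1 p + y2 q, ⟨p, q, h1, h2, h3, h4, rfl⟩, (humon p q).symm⟩
    · rintro ⟨m, ⟨p, q, h1, h2, h3, h4, rfl⟩, rfl⟩
      exact ⟨p, q, h1, h2, h3, h4, (humon p q).symm⟩
  have hT : ({x : MvPolynomial σ K | ∃ s, i + 1 ≤ s ∧ s ≤ j - 2 ∧ x = Y1 s} ∪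
        {x | ∃ s, j ≤ s ∧ s ≤ h ∧ x = Y2 s})
      = (fun m => monomial m (1 : K)) ''
        ({m | ∃ s, i + 1 ≤ s ∧ s ≤ j - 2 ∧ m = y1 s} ∪
         {m | ∃ s, j ≤ s ∧ s ≤ h ∧ m = y2 s}) := by
    ext x
    constructor
    · rintro (⟨s, h1, h2, rfl⟩ | ⟨s, h1, h2, rfl⟩)
      · exact ⟨y1 s, Or.inl ⟨s, h1, h2, rfl⟩, (hY1 s).symm⟩
      · exact ⟨y2 s, Or.inr ⟨s, h1, h2, rfl⟩, (hY2 s).symm⟩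
    · rintro ⟨m, (⟨s, h1, h2, rfl⟩ | ⟨s, h1, h2, rfl⟩), rfl⟩
      · exact Or.inl ⟨s, h1, h2, (hY1 s).symm⟩
      · exact Or.inr ⟨s, h1, h2, (hY2 s).symm⟩
  set e : σ →₀ ℕ := y1 i + y2 (j - 1) with he
  -- disjointness helpers
  have hih : i ≤ h := by omega
  have hj1h : j - 1 ≤ h := by omega
  have hj11 : 1 ≤ j - 1 := by omega
  have hd1 : ∀ p, 1 ≤ p → p ≤ h → p ≠ i → Disjoint (y1 p).support e.support := by
    intro p h1 h2 h3
    have hd : Disjoint (y1 p).support ((y1 i).support ∪ (y2 (j - 1)).support) :=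
      Finset.disjoint_union_right.mpr
        ⟨hdisj11 p i h1 h2 hi hih h3, hdisj12 p (j - 1) h1 h2 hj11 hj1h⟩
    exact hd.mono_right Finsupp.support_add
  have hd2 : ∀ q, 1 ≤ q → q ≤ h → q ≠ j - 1 → Disjoint (y2 q).support e.support := by
    intro q h1 h2 h3
    have hd : Disjoint (y2 q).support ((y1 i).support ∪ (y2 (j - 1)).support) :=
      Finset.disjoint_union_right.mpr
        ⟨(hdisj12 i q hi hih h1 h2).symm, hdisj22 q (j - 1) h1 h2 hj11 hj1h h3⟩
    exact hd.mono_right Finsupp.support_add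
  ext f
  rw [Ideal.mem_colon_span_singleton, hS, hT, mem_ideal_span_monomial_image,
    mem_ideal_span_monomial_image, humon, ← he, supp_mul_monomial]
  simp only [Finset.mem_map, addRightEmbedding_apply]
  constructor
  · intro H c hc
    obtain ⟨m, ⟨p, q, h1, h2, h3, h4, rfl⟩, hle⟩ := H (c + e) ⟨c, hc, rfl⟩
    have hy1p : y1 p ≤ c + e := le_trans le_self_add hle
    have hy2q : y2 q ≤ c + e := le_trans le_add_self hle
    have hph : p ≤ h := le_trans (le_of_lt h2) h3
    rcases h4 with hp | ⟨rfl, hq⟩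
    · by_cases hp2 : p ≤ j - 2
      · exact ⟨y1 p, Or.inl ⟨p, by omega, hp2, rfl⟩,
          finsupp_le_of_disjoint (hd1 p h1 hph (by omega)) hy1p⟩
      · have hq2 : j ≤ q := by omega
        exact ⟨y2 q, Or.inr ⟨q, hq2, h3, rfl⟩,
          finsupp_le_of_disjoint (hd2 q (by omega) h3 (by omega)) hy2q⟩
    · exact ⟨y2 q, Or.inr ⟨q, hq, h3, rfl⟩,
        finsupp_le_of_disjoint (hd2 q (by omega) h3 (by omega)) hy2q⟩
  · intro H c hcm
    obtain ⟨c', hc', rfl⟩ := hcm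
    obtain ⟨m, hm, hle⟩ := H c' hc'
    rcases hm with ⟨s, h1, h2, rfl⟩ | ⟨s, h1, h2, rfl⟩
    · refine ⟨y1 s + y2 (j - 1), ⟨s, j - 1, by omega, by omega, hj1h,
        Or.inl (by omega), rfl⟩, ?_⟩
      intro x
      have := hle x
      simp only [he, Finsupp.add_apply]
      omega
    · refine ⟨y1 i + y2 s, ⟨i, s, hi, by omega, h2, Or.inr ⟨rfl, h1⟩, rfl⟩, ?_⟩
      intro x
      have := hle x
      simp only [he, Finsupp.add_apply]
      omega
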